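/- Along solutions of the Bianchi VI_0 Wainwright–Hsu system with N_-^2 > N_+^2 and (Σ_-, N_+) ≠ (0,0), the function Z_1 := (Σ_-^2 + N_+^2)/(N_-^2 - N_+^2) satisfies Z_1' = -4 (Σ_-^2 (1+Σ_+)/(Σ_-^2 + N_+^2)) Z_1; in particular Z_1 is non-increasing when Σ_+ ≥ -1. -/

import Mathlib

/-- The function Z₁ = (Σ₋²+N₊²)/(N₋²-N₊²) satisfies
Z₁' = -4(Σ₋²(1+Σ₊)/(Σ₋²+N₊²))Z₁ along the Bianchi VI₀ flow; in particular Z₁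
is non-increasing when Σ₊ ≥ -1. -/
theorem Z1_monotone
    (qs : ℝ) (Np Nm Sp Sm Om : ℝ → ℝ)
    (q : ℝ → ℝ) (hq : ∀ τ, q τ = 2 * (Sp τ ^ 2 + Sm τ ^ 2) + qs * Om τ)
    (hNp : ∀ τ, HasDerivAt Np ((q τ + 2 * Sp τ) * Np τ + 2 * Real.sqrt 3 * Sm τ * Nm τ) τ)
    (hNm : ∀ τ, HasDerivAt Nm ((q τ + 2 * Sp τ) * Nm τ + 2 * Real.sqrt 3 * Sm τ * Np τ) τ)
    (hSp : ∀ τ, HasDerivAt Sp (-(2 - q τ) * Sp τ - 2 * (Nm τ ^ 2 - Np τ ^ 2)) τ)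
    (hSm : ∀ τ, HasDerivAt Sm (-(2 - q τ) * Sm τ - 2 * Real.sqrt 3 * Np τ * Nm τ) τ)
    (hcon : ∀ τ, Sp τ ^ 2 + Sm τ ^ 2 + Nm τ ^ 2 - Np τ ^ 2 + Om τ = 1)
    (hNN : ∀ τ, Np τ ^ 2 < Nm τ ^ 2)
    (hnz : ∀ τ, (Sm τ, Np τ) ≠ (0, 0))
    (Z1 : ℝ → ℝ)
    (hZ1 : ∀ τ, Z1 τ = (Sm τ ^ 2 + Np τ ^ 2) / (Nm τ ^ 2 - Np τ ^ 2)) :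
    (∀ τ, HasDerivAt Z1
        (-4 * (Sm τ ^ 2 * (1 + Sp τ) / (Sm τ ^ 2 + Np τ ^ 2)) * Z1 τ) τ) ∧
    ((∀ τ, -1 ≤ Sp τ) → Antitone Z1) := by
  have hA : ∀ τ, 0 < Sm τ ^ 2 + Np τ ^ 2 := by
    intro τ
    rcases lt_or_eq_of_le (add_nonneg (sq_nonneg (Sm τ)) (sq_nonneg (Np τ))) with h | h
    · exact h
    · exfalso
      have h1 : Sm τ = 0 ∧ Np τ = 0 := by
        constructor <;> nlinarith [sq_nonneg (Sm τ), sq_nonneg (Np τ)]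
      exact hnz τ (by simp [h1.1, h1.2])
  have hB : ∀ τ, 0 < Nm τ ^ 2 - Np τ ^ 2 := fun τ => sub_pos.mpr (hNN τ)
  have key : ∀ τ, HasDerivAt Z1 (-4 * Sm τ ^ 2 * (1 + Sp τ) / (Nm τ ^ 2 - Np τ ^ 2)) τ := by
    intro τ
    have hA' : HasDerivAt (fun t => Sm t ^ 2 + Np t ^ 2)
        (2 * Sm τ * (-(2 - q τ) * Sm τ - 2 * Real.sqrt 3 * Np τ * Nm τ) +
          2 * Np τ * ((q τ + 2 * Sp τ) * Np τ + 2 * Real.sqrt 3 * Sm τ * Nm τ)) τ := by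
      have h1 := ((hSm τ).pow 2).add ((hNp τ).pow 2)
      refine h1.congr_deriv ?_; push_cast; ring
    have hB' : HasDerivAt (fun t => Nm t ^ 2 - Np t ^ 2)
        (2 * Nm τ * ((q τ + 2 * Sp τ) * Nm τ + 2 * Real.sqrt 3 * Sm τ * Np τ) -
          2 * Np τ * ((q τ + 2 * Sp τ) * Np τ + 2 * Real.sqrt 3 * Sm τ * Nm τ)) τ := by
      have h1 := ((hNm τ).pow 2).sub ((hNp τ).pow 2)
      refine h1.congr_deriv ?_; push_cast; ring
    have hdiv := hA'.div hB' (ne_of_gt (hB τ))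
    have heq : Z1 = fun t => (Sm t ^ 2 + Np t ^ 2) / (Nm t ^ 2 - Np t ^ 2) :=
      funext fun t => hZ1 t
    rw [heq]
    refine hdiv.congr_deriv ?_
    have hBne := ne_of_gt (hB τ)
    field_simp
    ring
  constructor
  · intro τ
    have h := key τ
    have hAne := ne_of_gt (hA τ)
    have hBne := ne_of_gt (hB τ)
    have : -4 * (Sm τ ^ 2 * (1 + Sp τ) / (Sm τ ^ 2 + Np τ ^ 2)) * Z1 τ
        = -4 * Sm τ ^ 2 * (1 + Sp τ) / (Nm τ ^ 2 - Np τ ^ 2) := by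
      rw [hZ1 τ]; field_simp
    rw [this]; exact h
  · intro hSp1
    apply antitone_of_deriv_nonpos
    · intro τ; exact (key τ).differentiableAt
    · intro τ
      rw [(key τ).deriv]
      apply div_nonpos_of_nonpos_of_nonneg _ (le_of_lt (hB τ))
      nlinarith [sq_nonneg (Sm τ), hSp1 τ]
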